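/- Define γ : [0,1] → ℝ² by γ(t) = (0, −2πt) for t ∈ [0,1/2) and γ(t) = (2πt − π, −π) for t ∈ [1/2,1]. Then γ is a path from (0,0) to (π,−π), and for every t ∈ [0,1] the point γ(t) lies in A₁ ∪ B₁ ∪ B₂, i.e., Re φ(γ(t)) ≥ 1/10, or Re φ(γ(t)) ≤ −1/10, or Im φ(γ(t)) ≤ −1/10. More precisely: Re φ(γ(t)) ≥ 1/3 for t ∈ [0,1/4]; Im φ(γ(t)) ≤ −1/3 for t ∈ [1/4,3/8]; Re φ(γ(t)) < −1/10 for t ∈ [3/8,1/2]; and φ(γ(t)) = −1/3 for t ∈ [1/2,1]. -/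
import Mathlib


open Real

/-- The function `φ(x,y) = (1/3)(e^{ix} + e^{iy} + e^{i(x+y)})`. -/
noncomputable def phi : ℝ × ℝ → ℂ := fun p =>
  (1 / 3) * (Complex.exp (Complex.I * p.1) + Complex.exp (Complex.I * p.2) +
    Complex.exp (Complex.I * (p.1 + p.2)))

/-- `A₁ = {(x,y) ∈ [−π,π]² : Re φ(x,y) ≥ 1/10}`. -/
noncomputable def A1 : Set (ℝ × ℝ) :=
  {p | p ∈ Set.Icc (-π) π ×ˢ Set.Icc (-π) π ∧ (phi p).re ≥ 1 / 10}

/-- `B₁ = {(x,y) ∈ [−π,π]² : Re φ(x,y) ≤ −1/10}`. -/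
noncomputable def B1 : Set (ℝ × ℝ) :=
  {p | p ∈ Set.Icc (-π) π ×ˢ Set.Icc (-π) π ∧ (phi p).re ≤ -(1 / 10)}

/-- `B₂ = {(x,y) ∈ [−π,π]² : Im φ(x,y) ≤ −1/10}`. -/
noncomputable def B2 : Set (ℝ × ℝ) :=
  {p | p ∈ Set.Icc (-π) π ×ˢ Set.Icc (-π) π ∧ (phi p).im ≤ -(1 / 10)}

/-- The path `γ(t) = (0, −2πt)` for `t < 1/2`, `γ(t) = (2πt − π, −π)` for `t ≥ 1/2`. -/
noncomputable def gamma : ℝ → ℝ × ℝ := fun t =>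
  if t < 1 / 2 then (0, -(2 * π * t)) else (2 * π * t - π, -π)

lemma phi_re' (x y : ℝ) : (phi (x, y)).re = (Real.cos x + Real.cos y + Real.cos (x+y))/3 := by
  simp [phi, Complex.exp_re, Complex.exp_im, Complex.add_re, Complex.add_im,
    Complex.mul_re, Complex.mul_im]
  ring

lemma phi_im' (x y : ℝ) : (phi (x, y)).im = (Real.sin x + Real.sin y + Real.sin (x+y))/3 := by
  simp [phi, Complex.exp_re, Complex.exp_im, Complex.add_re, Complex.add_im,
    Complex.mul_re, Complex.mul_im]
  ring

lemma phi_bottom (x : ℝ) : phi (x, -π) = -(1/3) := by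
  apply Complex.ext
  · rw [phi_re']
    simp [show x + -π = x - π by ring, Real.cos_pi_sub]
    norm_num
  · rw [phi_im']
    simp [show x + -π = x - π by ring]

lemma sqrt2 : (1.3:ℝ) < Real.sqrt 2 := by
  nlinarith [Real.sq_sqrt (by norm_num : (2:ℝ) ≥ 0), Real.sqrt_nonneg 2]

/-- `γ` is a path from `(0,0)` to `(π,−π)` staying in `A₁ ∪ B₁ ∪ B₂`, with the precise
estimates on each of the four pieces. -/
theorem gamma_path_in_A1_B1_B2 :
    gamma 0 = (0, 0) ∧ gamma 1 = (π, -π) ∧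
    ContinuousOn gamma (Set.Icc 0 1) ∧
    (∀ t ∈ Set.Icc (0 : ℝ) 1, gamma t ∈ A1 ∪ B1 ∪ B2) ∧
    (∀ t ∈ Set.Icc (0 : ℝ) (1 / 4), (phi (gamma t)).re ≥ 1 / 3) ∧
    (∀ t ∈ Set.Icc (1 / 4 : ℝ) (3 / 8), (phi (gamma t)).im ≤ -(1 / 3)) ∧
    (∀ t ∈ Set.Icc (3 / 8 : ℝ) (1 / 2), (phi (gamma t)).re < -(1 / 10)) ∧
    (∀ t ∈ Set.Icc (1 / 2 : ℝ) 1, phi (gamma t) = -(1 / 3)) := by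
  have hπ := Real.pi_pos
  have h4 : ∀ t ∈ Set.Icc (1 / 2 : ℝ) 1, phi (gamma t) = -(1 / 3) := by
    intro t ht
    have : ¬ (t < 1/2) := not_lt.2 ht.1
    simp only [gamma, if_neg this]
    exact phi_bottom _
  have h1 : ∀ t ∈ Set.Icc (0 : ℝ) (1 / 4), (phi (gamma t)).re ≥ 1 / 3 := by
    intro t ht
    have hlt : t < 1/2 := lt_of_le_of_lt ht.2 (by norm_num)
    simp only [gamma, if_pos hlt]
    rw [phi_re']
    have hc : 0 ≤ Real.cos (2*π*t) := by
      apply Real.cos_nonneg_of_mem_Icc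
      constructor <;> nlinarith [ht.1, ht.2]
    rw [show (0:ℝ) + -(2*π*t) = -(2*π*t) by ring, Real.cos_neg]
    simp [Real.cos_zero]
    linarith
  have h2 : ∀ t ∈ Set.Icc (1 / 4 : ℝ) (3 / 8), (phi (gamma t)).im ≤ -(1 / 3) := by
    intro t ht
    have hlt : t < 1/2 := lt_of_le_of_lt ht.2 (by norm_num)
    simp only [gamma, if_pos hlt]
    rw [phi_im']
    rw [show (0:ℝ) + -(2*π*t) = -(2*π*t) by ring, Real.sin_neg]
    have hs : Real.sin (2*π*t) ≥ 1/2 := by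
      have key : Real.cos (π/4) ≤ Real.cos (2*π*t - π/2) := by
        apply Real.cos_le_cos_of_nonneg_of_le_pi
        · nlinarith [ht.1]
        · linarith
        · nlinarith [ht.2]
      rw [show 2*π*t - π/2 = -(π/2 - 2*π*t) by ring, Real.cos_neg,
        Real.cos_pi_div_two_sub] at key
      rw [Real.cos_pi_div_four] at key
      nlinarith [sqrt2]
    simp [Real.sin_zero]
    linarith
  have h3 : ∀ t ∈ Set.Icc (3 / 8 : ℝ) (1 / 2), (phi (gamma t)).re < -(1 / 10) := by
    intro t ht
    rcases lt_or_ge t (1/2) with hlt | hge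
    · simp only [gamma, if_pos hlt]
      rw [phi_re']
      rw [show (0:ℝ) + -(2*π*t) = -(2*π*t) by ring, Real.cos_neg]
      have hc : Real.cos (2*π*t) ≤ Real.cos (3*π/4) := by
        apply Real.cos_le_cos_of_nonneg_of_le_pi
        · positivity
        · nlinarith
        · nlinarith [ht.1]
      rw [show 3*π/4 = π - π/4 by ring, Real.cos_pi_sub, Real.cos_pi_div_four] at hc
      simp [Real.cos_zero]
      nlinarith [sqrt2]
    · have := h4 t ⟨hge, le_trans ht.2 (by norm_num)⟩
      rw [this]
      norm_num
  have hsq : ∀ t ∈ Set.Icc (0 : ℝ) 1,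
      gamma t ∈ Set.Icc (-π) π ×ˢ Set.Icc (-π) π := by
    intro t ht
    simp only [gamma]
    split_ifs with h
    · simp only [Set.mem_prod, Set.mem_Icc]
      refine ⟨⟨by linarith, by linarith⟩, ⟨by nlinarith [ht.1], by nlinarith [ht.1]⟩⟩
    · push_neg at h
      simp only [Set.mem_prod, Set.mem_Icc]
      refine ⟨⟨by nlinarith [ht.2], by nlinarith [ht.2]⟩, ⟨le_refl _, by linarith⟩⟩
  have hmem : ∀ t ∈ Set.Icc (0 : ℝ) 1, gamma t ∈ A1 ∪ B1 ∪ B2 := by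
    intro t ht
    rcases le_or_gt t (1/4) with hle | hgt
    · left; left
      exact ⟨hsq t ht, le_trans (by norm_num) (h1 t ⟨ht.1, hle⟩)⟩
    · rcases le_or_gt t (3/8) with hle2 | hgt2
      · right
        exact ⟨hsq t ht, le_trans (h2 t ⟨hgt.le, hle2⟩) (by norm_num)⟩
      · rcases le_or_gt t (1/2) with hle3 | hgt3
        · left; right
          exact ⟨hsq t ht, le_of_lt (h3 t ⟨hgt2.le, hle3⟩)⟩
        · left; right
          refine ⟨hsq t ht, ?_⟩
          have := h4 t ⟨hgt3.le, ht.2⟩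
          rw [this]; norm_num
  refine ⟨?_, ?_, ?_, hmem, h1, h2, h3, h4⟩
  · norm_num [gamma]
  · norm_num [gamma]; ring
  · have : gamma = fun t => (max (2*π*t - π) 0, max (-(2*π*t)) (-π)) := by
      funext t
      simp only [gamma]
      split_ifs with h
      · have h1 : 2*π*t - π ≤ 0 := by nlinarith
        have h2 : -π ≤ -(2*π*t) := by nlinarith
        simp [max_eq_right h1, max_eq_left h2]
      · push_neg at h
        have h1 : (0:ℝ) ≤ 2*π*t - π := by nlinarith
        have h2 : -(2*π*t) ≤ -π := by nlinarith
        simp [max_eq_left h1, max_eq_right h2]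
    rw [this]; fun_prop
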